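/- Let G be a group with generating set X such that the Cayley graph Γ(G,X) is δ-hyperbolic and the action of G on Γ(G,X) is acylindrical. Then there exist constants κ₀ ≥ 1 and ε₀ ≥ 0, depending only on (G,X), such that for every element g ∈ G which is loxodromic with respect to X and shortest in its conjugacy class, the bi-infinite path L(1,g) through the points gⁿ (n ∈ ℤ) is a (κ₀, ε₀)-quasi-geodesic. -/

import Mathlib

/-- Word length of `g` with respect to the generating set `X`. -/
noncomputable def wordLength {G : Type*} [Group G] (X : Set G) (g : G) : ℕ :=
  sInf {n : ℕ | ∃ l : List G, l.length = n ∧ (∀ x ∈ l, x ∈ X ∨ x⁻¹ ∈ X) ∧ l.prod = g}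

/-- The word metric on `G` with respect to `X` (distance between vertices of the
Cayley graph `Γ(G,X)`). -/
noncomputable def wordDist {G : Type*} [Group G] (X : Set G) (g h : G) : ℕ :=
  wordLength X (g⁻¹ * h)

/-- Gromov product in the word metric. -/
noncomputable def gromovProd {G : Type*} [Group G] (X : Set G) (x y w : G) : ℝ :=
  ((wordDist X w x : ℝ) + (wordDist X w y : ℝ) - (wordDist X x y : ℝ)) / 2

/-- The Cayley graph `Γ(G,X)` is `δ`-hyperbolic (four–point condition). -/
def CayleyHyperbolic {G : Type*} [Group G] (X : Set G) (δ : ℝ) : Prop :=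
  ∀ x y z w : G, min (gromovProd X x z w) (gromovProd X z y w) - δ ≤ gromovProd X x y w

/-- The action of `G` on its Cayley graph `Γ(G,X)` is acylindrical. -/
def CayleyAcylindrical {G : Type*} [Group G] (X : Set G) : Prop :=
  ∀ ε : ℝ, 0 ≤ ε → ∃ R N : ℝ, 0 < R ∧ 0 < N ∧ ∀ g : G, R ≤ (wordLength X g : ℝ) →
    {f : G | (wordLength X f : ℝ) ≤ ε ∧ (wordLength X (g⁻¹ * f * g) : ℝ) ≤ ε}.Finite ∧
    ({f : G | (wordLength X f : ℝ) ≤ ε ∧ (wordLength X (g⁻¹ * f * g) : ℝ) ≤ ε}.ncard : ℝ) ≤ N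

/-- `g` is loxodromic with respect to `X`: `|gⁿ|_X ≥ ηn − ν` for some `η > 0`, `ν ≥ 0`. -/
def Loxodromic {G : Type*} [Group G] (X : Set G) (g : G) : Prop :=
  ∃ η : ℝ, 0 < η ∧ ∃ ν : ℝ, 0 ≤ ν ∧ ∀ n : ℕ, η * n - ν ≤ (wordLength X (g ^ n) : ℝ)

/-- `g` is shortest in its conjugacy class. -/
def ShortestInConjClass {G : Type*} [Group G] (X : Set G) (g : G) : Prop :=
  ∀ h : G, wordLength X g ≤ wordLength X (h⁻¹ * g * h)

/-- `p : ℤ → G` is the bi-infinite path `L(1,g)` in `Γ(G,X)`, parametrized by arclength: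
it starts at `1`, is `g`-periodic with period `|g|_X` (all periods bear the same label),
and traverses a geodesic from `1` to `g` on `[0, |g|_X]`. -/
def IsAxisPath {G : Type*} [Group G] (X : Set G) (g : G) (p : ℤ → G) : Prop :=
  p 0 = 1 ∧ (∀ t : ℤ, p (t + (wordLength X g : ℤ)) = g * p t) ∧
    ∀ i j : ℤ, 0 ≤ i → i ≤ j → j ≤ (wordLength X g : ℤ) →
      (wordDist X (p i) (p j) : ℤ) = j - i

/-- `p : ℤ → G` is a `(κ,ε)`-quasi-geodesic for the word metric. -/
def IsQuasiGeodesicPath {G : Type*} [Group G] (X : Set G) (κ ε : ℝ) (p : ℤ → G) : Prop :=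
  ∀ i j : ℤ, (1 / κ) * |(i : ℝ) - (j : ℝ)| - ε ≤ (wordDist X (p i) (p j) : ℝ) ∧
    (wordDist X (p i) (p j) : ℝ) ≤ κ * |(i : ℝ) - (j : ℝ)| + ε


section Basics
variable {G : Type*} [Group G] {X : Set G}

lemma rep_exists (hX : Subgroup.closure X = ⊤) (g : G) :
    ∃ l : List G, (∀ x ∈ l, x ∈ X ∨ x⁻¹ ∈ X) ∧ l.prod = g := by
  have hg : g ∈ Subgroup.closure X := by rw [hX]; trivial
  induction hg using Subgroup.closure_induction with
  | mem x hx => exact ⟨[x], by simpa using Or.inl hx, by simp⟩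
  | one => exact ⟨[], by simp, by simp⟩
  | mul a b ha hb iha ihb =>
      obtain ⟨l1, h1, h1p⟩ := iha
      obtain ⟨l2, h2, h2p⟩ := ihb
      refine ⟨l1 ++ l2, ?_, by simp [h1p, h2p]⟩
      intro x hx
      rcases List.mem_append.mp hx with h | h
      · exact h1 x h
      · exact h2 x h
  | inv a ha iha =>
      obtain ⟨l, h1, h1p⟩ := iha
      refine ⟨(l.map fun x => x⁻¹).reverse, ?_, by rw [← List.prod_inv_reverse, h1p]⟩
      intro x hx
      simp only [List.mem_reverse, List.mem_map] at hx
      obtain ⟨y, hy, rfl⟩ := hx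
      rcases h1 y hy with h | h
      · exact Or.inr (by simpa using h)
      · exact Or.inl h

lemma wl_set_nonempty (hX : Subgroup.closure X = ⊤) (g : G) :
    {n : ℕ | ∃ l : List G, l.length = n ∧ (∀ x ∈ l, x ∈ X ∨ x⁻¹ ∈ X) ∧ l.prod = g}.Nonempty := by
  obtain ⟨l, h1, h2⟩ := rep_exists hX g
  exact ⟨l.length, l, rfl, h1, h2⟩

lemma wl_spec (hX : Subgroup.closure X = ⊤) (g : G) :
    ∃ l : List G, l.length = wordLength X g ∧ (∀ x ∈ l, x ∈ X ∨ x⁻¹ ∈ X) ∧ l.prod = g :=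
  Nat.sInf_mem (wl_set_nonempty hX g)

lemma wl_le {g : G} {l : List G} (h1 : ∀ x ∈ l, x ∈ X ∨ x⁻¹ ∈ X) (h2 : l.prod = g) :
    wordLength X g ≤ l.length :=
  Nat.sInf_le ⟨l, rfl, h1, h2⟩

lemma wl_one : wordLength X (1 : G) = 0 :=
  Nat.le_zero.mp (wl_le (l := []) (by simp) (by simp))

lemma wl_mul (hX : Subgroup.closure X = ⊤) (a b : G) :
    wordLength X (a * b) ≤ wordLength X a + wordLength X b := by
  obtain ⟨l1, hl1, h1, h1p⟩ := wl_spec hX a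
  obtain ⟨l2, hl2, h2, h2p⟩ := wl_spec hX b
  calc wordLength X (a * b) ≤ (l1 ++ l2).length := by
        refine wl_le ?_ (by simp [h1p, h2p])
        intro x hx
        rcases List.mem_append.mp hx with h | h
        · exact h1 x h
        · exact h2 x h
    _ = wordLength X a + wordLength X b := by simp [hl1, hl2]

lemma wl_inv_le (hX : Subgroup.closure X = ⊤) (a : G) :
    wordLength X a⁻¹ ≤ wordLength X a := by
  obtain ⟨l, hl, h1, h1p⟩ := wl_spec hX a
  calc wordLength X a⁻¹ ≤ ((l.map fun x => x⁻¹).reverse).length := by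
        refine wl_le ?_ (by rw [← List.prod_inv_reverse, h1p])
        intro x hx
        simp only [List.mem_reverse, List.mem_map] at hx
        obtain ⟨y, hy, rfl⟩ := hx
        rcases h1 y hy with h | h
        · exact Or.inr (by simpa using h)
        · exact Or.inl h
    _ = wordLength X a := by simp [hl]

lemma wl_inv (hX : Subgroup.closure X = ⊤) (a : G) :
    wordLength X a⁻¹ = wordLength X a :=
  le_antisymm (wl_inv_le hX a) (by simpa using wl_inv_le hX a⁻¹)

lemma wl_pow (hX : Subgroup.closure X = ⊤) (g : G) (n : ℕ) :
    wordLength X (g ^ n) ≤ n * wordLength X g := by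
  induction n with
  | zero => simp [wl_one]
  | succ n ih =>
      calc wordLength X (g ^ (n + 1)) = wordLength X (g ^ n * g) := by rw [pow_succ]
        _ ≤ wordLength X (g ^ n) + wordLength X g := wl_mul hX _ _
        _ ≤ n * wordLength X g + wordLength X g := by omega
        _ = (n + 1) * wordLength X g := by ring

lemma wd_self (x : G) : wordDist X x x = 0 := by
  simp [wordDist, wl_one]

lemma wd_symm (hX : Subgroup.closure X = ⊤) (x y : G) :
    wordDist X x y = wordDist X y x := by
  unfold wordDist
  rw [show y⁻¹ * x = (x⁻¹ * y)⁻¹ by group, wl_inv hX]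

lemma wd_triangle (hX : Subgroup.closure X = ⊤) (x y z : G) :
    wordDist X x z ≤ wordDist X x y + wordDist X y z := by
  unfold wordDist
  calc wordLength X (x⁻¹ * z) = wordLength X ((x⁻¹ * y) * (y⁻¹ * z)) := by group
    _ ≤ _ := wl_mul hX _ _

lemma wd_left (a x y : G) : wordDist X (a * x) (a * y) = wordDist X x y := by
  unfold wordDist
  congr 1
  group

end Basics
section Chain
variable {G : Type*} [Group G] {X : Set G}

/-- Conjugates of `g^q` have length at least `τ q`, given the Bowditch bound for `g`. -/
lemma conj_lower (hX : Subgroup.closure X = ⊤) {τ : ℝ} (hτ : 0 < τ) (g x : G)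
    (hg : ∀ n : ℕ, τ * n ≤ (wordLength X (g ^ n) : ℝ)) (q : ℕ) :
    τ * q ≤ (wordLength X (x⁻¹ * g ^ q * x) : ℝ) := by
  set a : ℝ := (wordLength X (x⁻¹ * g ^ q * x) : ℝ) with ha
  by_contra hcon
  push_neg at hcon
  have key : ∀ n : ℕ, τ * q * n ≤ 2 * (wordLength X x : ℝ) + n * a := by
    intro n
    have h1 : (g : G) ^ (q * n) = x * (x⁻¹ * g ^ q * x) ^ n * x⁻¹ := by
      rw [show x⁻¹ * g ^ q * x = x⁻¹ * g ^ q * x⁻¹⁻¹ by group, conj_pow]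
      group
    have h2 : wordLength X (g ^ (q * n)) ≤
        wordLength X x + wordLength X ((x⁻¹ * g ^ q * x) ^ n) + wordLength X x := by
      calc wordLength X (g ^ (q * n))
          = wordLength X ((x * (x⁻¹ * g ^ q * x) ^ n) * x⁻¹) := by rw [← h1]
        _ ≤ wordLength X (x * (x⁻¹ * g ^ q * x) ^ n) + wordLength X x⁻¹ := wl_mul hX _ _
        _ ≤ wordLength X x + wordLength X ((x⁻¹ * g ^ q * x) ^ n) + wordLength X x := by
            have := wl_mul hX x ((x⁻¹ * g ^ q * x) ^ n)
            rw [wl_inv hX]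
            omega
    have h3 : wordLength X ((x⁻¹ * g ^ q * x) ^ n) ≤ n * wordLength X (x⁻¹ * g ^ q * x) :=
      wl_pow hX _ n
    have h4 := hg (q * n)
    have h5 : (wordLength X (g ^ (q * n)) : ℝ) ≤
        2 * (wordLength X x : ℝ) + n * a := by
      rw [ha]
      push_cast
      have h2' : (wordLength X (g ^ (q * n)) : ℝ) ≤
          (wordLength X x : ℝ) + (wordLength X ((x⁻¹ * g ^ q * x) ^ n) : ℝ)
            + (wordLength X x : ℝ) := by exact_mod_cast h2
      have h3' : (wordLength X ((x⁻¹ * g ^ q * x) ^ n) : ℝ) ≤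
          (n : ℝ) * (wordLength X (x⁻¹ * g ^ q * x) : ℝ) := by exact_mod_cast h3
      linarith
    have h4' : τ * q * n ≤ (wordLength X (g ^ (q * n)) : ℝ) := by
      have := hg (q * n)
      push_cast at this
      linarith [this]
    linarith
  obtain ⟨n, hn⟩ := exists_nat_gt ((2 * (wordLength X x : ℝ)) / (τ * q - a))
  have hpos : 0 < τ * q - a := by linarith
  have hn' : 2 * (wordLength X x : ℝ) < n * (τ * q - a) := by
    rw [div_lt_iff₀ hpos] at hn
    linarith
  have := key n
  nlinarith

lemma gp_add (hX : Subgroup.closure X = ⊤) (a b w : G) :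
    gromovProd X a b w + gromovProd X a w b = (wordDist X b w : ℝ) := by
  unfold gromovProd
  rw [wd_symm hX w a, wd_symm hX b a, wd_symm hX w b]
  ring

lemma gp_comm (hX : Subgroup.closure X = ⊤) (a b w : G) :
    gromovProd X a b w = gromovProd X b a w := by
  unfold gromovProd
  rw [wd_symm hX a b]
  ring

/-- The key chain estimate: a broken path whose consecutive pairs of segments are
geodesic (zero Gromov product at each breakpoint) and whose segments (except the
last) are long compared with `δ` makes progress. -/
lemma chain_lower (hX : Subgroup.closure X = ⊤) {δ : ℝ} (hδ : 0 ≤ δ)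
    (hhyp : CayleyHyperbolic X δ) (x : ℕ → G) (ℓ : ℕ → ℝ) (n : ℕ)
    (hseg : ∀ k < n, (wordDist X (x k) (x (k + 1)) : ℝ) = ℓ k)
    (hbreak : ∀ k, k + 2 ≤ n → (wordDist X (x k) (x (k + 2)) : ℝ) = ℓ k + ℓ (k + 1))
    (hlong : ∀ k, k + 2 ≤ n → 3 * δ + 1 ≤ ℓ k) :
    (∑ k ∈ Finset.range n, ℓ k) - 4 * δ * n ≤ (wordDist X (x 0) (x n) : ℝ) := by
  have hQ : ∀ m, m + 1 ≤ n → gromovProd X (x 0) (x (m + 1)) (x m) ≤ 2 * δ := by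
    intro m
    induction m with
    | zero =>
        intro _
        unfold gromovProd
        rw [wd_self]
        push_cast
        linarith
    | succ m ih =>
        intro h
        have hQm : gromovProd X (x 0) (x (m + 1)) (x m) ≤ 2 * δ := ih (by omega)
        have h4 := hhyp (x m) (x (m + 2)) (x 0) (x (m + 1))
        have hz : gromovProd X (x m) (x (m + 2)) (x (m + 1)) = 0 := by
          unfold gromovProd
          rw [wd_symm hX (x (m + 1)) (x m), hbreak m h]
          have e1 : (wordDist X (x m) (x (m + 1)) : ℝ) = ℓ m := hseg m (by omega)
          have e2 : (wordDist X (x (m + 1)) (x (m + 2)) : ℝ) = ℓ (m + 1) := hseg (m + 1) (by omega)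
          rw [e1, e2]
          ring
        have hAval : gromovProd X (x m) (x 0) (x (m + 1)) =
            ℓ m - gromovProd X (x 0) (x (m + 1)) (x m) := by
          have h1 := gp_add hX (x 0) (x (m + 1)) (x m)
          have h2 : gromovProd X (x m) (x 0) (x (m + 1)) =
              gromovProd X (x 0) (x m) (x (m + 1)) := gp_comm hX _ _ _
          have h3 : (wordDist X (x (m + 1)) (x m) : ℝ) = ℓ m := by
            rw [wd_symm hX]; exact hseg m (by omega)
          rw [h2]
          linarith
        have hA : δ + 1 ≤ gromovProd X (x m) (x 0) (x (m + 1)) := by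
          have := hlong m h
          rw [hAval]
          linarith
        have hmin : min (gromovProd X (x m) (x 0) (x (m + 1)))
            (gromovProd X (x 0) (x (m + 2)) (x (m + 1))) ≤ δ := by
          rw [hz] at h4
          linarith
        rcases le_total (gromovProd X (x m) (x 0) (x (m + 1)))
            (gromovProd X (x 0) (x (m + 2)) (x (m + 1))) with hc | hc
        · rw [min_eq_left hc] at hmin
          linarith
        · rw [min_eq_right hc] at hmin
          linarith
  have hD : ∀ m, m ≤ n → (∑ k ∈ Finset.range m, ℓ k) - 4 * δ * m ≤
      (wordDist X (x 0) (x m) : ℝ) := by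
    intro m
    induction m with
    | zero => intro _; simp [wd_self]
    | succ m ih =>
        intro h
        have hDm := ih (by omega)
        have hQm := hQ m h
        have hid : gromovProd X (x 0) (x (m + 1)) (x m) =
            ((wordDist X (x m) (x 0) : ℝ) + (wordDist X (x m) (x (m + 1)) : ℝ)
              - (wordDist X (x 0) (x (m + 1)) : ℝ)) / 2 := rfl
        have e1 : (wordDist X (x m) (x (m + 1)) : ℝ) = ℓ m := hseg m (by omega)
        have e2 : (wordDist X (x m) (x 0) : ℝ) = (wordDist X (x 0) (x m) : ℝ) := by
          rw [wd_symm hX]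
        rw [Finset.sum_range_succ]
        push_cast
        rw [hid, e1, e2] at hQm
        linarith
  have := hD n le_rfl
  linarith

end Chain
section Axis
variable {G : Type*} [Group G] {X : Set G} {g : G} {p : ℤ → G}

lemma axis_translate (hp : IsAxisPath X g p) (k t : ℤ) :
    p (t + k * (wordLength X g : ℤ)) = g ^ k * p t := by
  induction k using Int.induction_on generalizing t with
  | zero => simp
  | succ k ih =>
      rw [show t + ((k : ℤ) + 1) * (wordLength X g : ℤ) =
        (t + k * (wordLength X g : ℤ)) + (wordLength X g : ℤ) by ring, hp.2.1, ih]
      group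
  | pred k ih =>
      have h := hp.2.1 (t + (-(k : ℤ) - 1) * (wordLength X g : ℤ))
      rw [show (t + (-(k : ℤ) - 1) * (wordLength X g : ℤ)) + (wordLength X g : ℤ) =
        t + (-(k : ℤ)) * (wordLength X g : ℤ) by ring, ih] at h
      have h2 : g⁻¹ * (g ^ (-(k : ℤ)) * p t) =
          p (t + (-(k : ℤ) - 1) * (wordLength X g : ℤ)) := by
        rw [h]
        group
      rw [← h2]
      group

lemma axis_shift (hp : IsAxisPath X g p) (k i j : ℤ) :
    wordDist X (p (i + k * (wordLength X g : ℤ))) (p (j + k * (wordLength X g : ℤ))) =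
      wordDist X (p i) (p j) := by
  rw [axis_translate hp k i, axis_translate hp k j, wd_left]

lemma axis_unit (hp : IsAxisPath X g p) (hM : 1 ≤ (wordLength X g : ℤ)) (t : ℤ) :
    (wordDist X (p t) (p (t + 1)) : ℤ) ≤ 1 := by
  set M : ℤ := (wordLength X g : ℤ) with hMdef
  have hdm : t / M * M + t % M = t := by rw [mul_comm]; exact Int.mul_ediv_add_emod t M
  have h0 : 0 ≤ t % M := Int.emod_nonneg t (by omega)
  have h1 : t % M < M := Int.emod_lt_of_pos t (by omega)
  have hsh := axis_shift hp (t / M) (t % M) (t % M + 1)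
  rw [show t % M + t / M * M = t by omega, show t % M + 1 + t / M * M = t + 1 by omega] at hsh
  rw [hsh, hp.2.2 (t % M) (t % M + 1) h0 (by omega) (by omega)]
  omega

lemma axis_upper (hp : IsAxisPath X g p) (hM : 1 ≤ (wordLength X g : ℤ))
    (hX : Subgroup.closure X = ⊤) :
    ∀ i j : ℤ, i ≤ j → (wordDist X (p i) (p j) : ℤ) ≤ j - i := by
  intro i j hij
  refine Int.le_induction (motive := fun j _ => (wordDist X (p i) (p j) : ℤ) ≤ j - i) ?_ ?_ j hij
  · simp [wd_self]
  · intro j hij ih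
    have ht := wd_triangle hX (p i) (p j) (p (j + 1))
    have hu := axis_unit hp hM j
    have ht' : (wordDist X (p i) (p (j + 1)) : ℤ) ≤
        (wordDist X (p i) (p j) : ℤ) + (wordDist X (p j) (p (j + 1)) : ℤ) := by
      exact_mod_cast ht
    omega

lemma axis_exact (hp : IsAxisPath X g p) (hshort : ShortestInConjClass X g)
    (hM : 1 ≤ (wordLength X g : ℤ)) (hX : Subgroup.closure X = ⊤) :
    ∀ i j : ℤ, i ≤ j → j - i ≤ (wordLength X g : ℤ) →
      (wordDist X (p i) (p j) : ℤ) = j - i := by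
  intro i j hij hlen
  set M : ℤ := (wordLength X g : ℤ) with hMdef
  have hdm : i / M * M + i % M = i := by rw [mul_comm]; exact Int.mul_ediv_add_emod i M
  set i' : ℤ := i % M with hi'
  set j' : ℤ := j - i / M * M with hj'
  have h0 : 0 ≤ i' := Int.emod_nonneg i (by omega)
  have h1 : i' < M := Int.emod_lt_of_pos i (by omega)
  have hij' : j' - i' = j - i := by omega
  have hsh := axis_shift hp (i / M) i' j'
  rw [show i' + i / M * M = i by omega, show j' + i / M * M = j by omega] at hsh
  rw [hsh]
  by_cases hcase : j' ≤ M
  · rw [hp.2.2 i' j' h0 (by omega) hcase]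
    omega
  · push_neg at hcase
    -- upper bound
    have hup : (wordDist X (p i') (p j') : ℤ) ≤ j' - i' := axis_upper hp hM hX i' j' (by omega)
    -- lower bound via shortest-in-conjugacy-class
    have hPM : p (i' + M) = g * p i' := hp.2.1 i'
    have hd1 : (wordLength X g : ℤ) ≤ (wordDist X (p i') (p (i' + M)) : ℤ) := by
      have := hshort (p i')
      unfold wordDist
      rw [hPM, ← mul_assoc]
      exact_mod_cast this
    have hPJ : p j' = g * p (j' - M) := by
      have := hp.2.1 (j' - M)
      rw [show j' - M + M = j' by ring] at this
      exact this
    have hd2 : (wordDist X (p j') (p (i' + M)) : ℤ) = i' - (j' - M) := by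
      rw [hPJ, hPM, wd_left]
      exact hp.2.2 (j' - M) i' (by omega) (by omega) (by omega)
    have htri := wd_triangle hX (p i') (p j') (p (i' + M))
    have htri' : (wordDist X (p i') (p (i' + M)) : ℤ) ≤
        (wordDist X (p i') (p j') : ℤ) + (wordDist X (p j') (p (i' + M)) : ℤ) := by
      exact_mod_cast htri
    omega

end Axis
section Cases
variable {G : Type*} [Group G] {X : Set G}

/-- Large translation length: the chain lemma gives linear progress. -/
lemma case_large (hX : Subgroup.closure X = ⊤) {δ : ℝ} (hδ : 0 ≤ δ)
    (hhyp : CayleyHyperbolic X δ) {g : G} {p : ℤ → G}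
    (hp : IsAxisPath X g p) (hshort : ShortestInConjClass X g)
    (hbig : 16 * δ + 3 ≤ ((wordLength X g : ℤ) : ℝ)) (i j : ℤ) (hij : i ≤ j)
    (hfar : (wordLength X g : ℤ) < j - i) :
    ((j - i : ℤ) : ℝ) / 2 - 4 * δ ≤ (wordDist X (p i) (p j) : ℝ) := by
  obtain ⟨M, hM⟩ : ∃ M : ℤ, M = (wordLength X g : ℤ) := ⟨_, rfl⟩
  obtain ⟨s, hs⟩ : ∃ s : ℤ, s = j - i := ⟨_, rfl⟩
  rw [← hM] at hbig hfar
  rw [← hs] at hfar ⊢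
  have hMR : (3:ℝ) ≤ (M : ℝ) := by linarith
  have hM3 : 3 ≤ M := by exact_mod_cast hMR
  have hM1 : 1 ≤ (wordLength X g : ℤ) := by omega
  have hs0 : 0 ≤ s := by omega
  have hsR0 : (0:ℝ) ≤ (s : ℝ) := by exact_mod_cast hs0
  -- half period
  obtain ⟨L, hL⟩ : ∃ L : ℤ, L = M / 2 := ⟨_, rfl⟩
  have hdm : 2 * L + M % 2 = M := by rw [hL]; exact Int.mul_ediv_add_emod M 2
  have hr2 : 0 ≤ M % 2 := Int.emod_nonneg M (by norm_num)
  have hr2' : M % 2 < 2 := Int.emod_lt_of_pos M (by norm_num)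
  have hL1 : 1 ≤ L := by omega
  have h2L : 2 * L ≤ M := by omega
  have hLR : 8 * δ + 1 ≤ (L : ℝ) := by
    have hc : (M : ℝ) ≤ 2 * (L : ℝ) + 1 := by exact_mod_cast (by omega : M ≤ 2 * L + 1)
    linarith
  have hLpos : (0:ℝ) < (L : ℝ) := by
    have : (1:ℝ) ≤ (L:ℝ) := by exact_mod_cast hL1
    linarith
  -- number of segments
  obtain ⟨c, hc⟩ : ∃ c : ℤ, c = (s + L - 1) / L := ⟨_, rfl⟩
  have hcdm : L * c + (s + L - 1) % L = s + L - 1 := by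
    rw [hc]; exact Int.mul_ediv_add_emod _ L
  have hrem0 : 0 ≤ (s + L - 1) % L := Int.emod_nonneg _ (by omega)
  have hrem1 : (s + L - 1) % L < L := Int.emod_lt_of_pos _ (by omega)
  have hcL : s ≤ L * c := by omega
  have hc1 : 1 ≤ c := by nlinarith
  obtain ⟨n, hn⟩ : ∃ n : ℕ, (n : ℤ) = c := ⟨c.toNat, Int.toNat_of_nonneg (by omega)⟩
  have key1 : ∀ m : ℤ, m ≤ c - 1 → m * L < s := by
    intro m hm
    have h1 : m * L ≤ (c - 1) * L := mul_le_mul_of_nonneg_right hm (by omega)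
    nlinarith
  -- the breakpoints
  obtain ⟨f, hfdef⟩ : ∃ f : ℕ → ℤ, ∀ k, f k = min ((k : ℤ) * L) s :=
    ⟨fun k => min ((k : ℤ) * L) s, fun _ => rfl⟩
  have hf0 : f 0 = 0 := by rw [hfdef]; simp [hs0]
  have hfn : f n = s := by
    rw [hfdef]
    have : s ≤ (n : ℤ) * L := by rw [hn]; linarith [hcL, mul_comm L c]
    omega
  have hfmono : ∀ k : ℕ, f k ≤ f (k + 1) ∧ f (k + 1) - f k ≤ L ∧ 0 ≤ f k := by
    intro k
    have hkL : ((k : ℤ) + 1) * L = (k : ℤ) * L + L := by ring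
    have hkL0 : (0:ℤ) ≤ (k : ℤ) * L := by positivity
    refine ⟨?_, ?_, ?_⟩ <;>
    · simp only [hfdef]
      push_cast
      omega
  have hval : ∀ k : ℕ, (k : ℤ) ≤ c - 1 → f k = (k : ℤ) * L := by
    intro k hk
    have := key1 (k : ℤ) hk
    rw [hfdef]
    omega
  -- chain hypotheses
  have hseg : ∀ k < n, (wordDist X (p (i + f k)) (p (i + f (k + 1))) : ℝ) =
      ((f (k + 1) : ℤ) : ℝ) - ((f k : ℤ) : ℝ) := by
    intro k _
    obtain ⟨h1, h2, h3⟩ := hfmono k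
    have he := axis_exact hp hshort hM1 hX (i + f k) (i + f (k + 1))
      (by omega) (by omega)
    have he2 : (wordDist X (p (i + f k)) (p (i + f (k + 1))) : ℤ) = f (k + 1) - f k := by
      omega
    exact_mod_cast he2
  have hbreak : ∀ k, k + 2 ≤ n → (wordDist X (p (i + f k)) (p (i + f (k + 2))) : ℝ) =
      (((f (k + 1) : ℤ) : ℝ) - ((f k : ℤ) : ℝ)) +
        (((f (k + 2) : ℤ) : ℝ) - ((f (k + 1) : ℤ) : ℝ)) := by
    intro k _
    obtain ⟨h1, h2, h3⟩ := hfmono k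
    have h4 : f (k + 1) ≤ f (k + 2) := (hfmono (k + 1)).1
    have h5 : f (k + 2) - f (k + 1) ≤ L := (hfmono (k + 1)).2.1
    have he := axis_exact hp hshort hM1 hX (i + f k) (i + f (k + 2))
      (by omega) (by omega)
    have he2 : (wordDist X (p (i + f k)) (p (i + f (k + 2))) : ℤ) = f (k + 2) - f k := by
      omega
    have he3 : (wordDist X (p (i + f k)) (p (i + f (k + 2))) : ℝ) =
        ((f (k + 2) : ℤ) : ℝ) - ((f k : ℤ) : ℝ) := by exact_mod_cast he2
    rw [he3]
    ring
  have hlong : ∀ k, k + 2 ≤ n →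
      3 * δ + 1 ≤ ((f (k + 1) : ℤ) : ℝ) - ((f k : ℤ) : ℝ) := by
    intro k hk
    have hv1 : f (k + 1) = ((k : ℤ) + 1) * L := by
      have := hval (k + 1) (by omega)
      push_cast at this
      exact this
    have hv0 : f k = (k : ℤ) * L := hval k (by omega)
    rw [hv1, hv0]
    push_cast
    nlinarith [hLR]
  have hchain := chain_lower hX hδ hhyp (fun k => p (i + f k))
    (fun k => ((f (k + 1) : ℤ) : ℝ) - ((f k : ℤ) : ℝ)) n hseg hbreak hlong
  have hsum : (∑ k ∈ Finset.range n, (((f (k + 1) : ℤ) : ℝ) - ((f k : ℤ) : ℝ))) = (s : ℝ) := by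
    rw [Finset.sum_range_sub (f := fun k => ((f k : ℤ) : ℝ)) n, hfn, hf0]
    norm_num
  have e0 : i + f 0 = i := by omega
  have en : i + f n = j := by omega
  have hchain2 : (s : ℝ) - 4 * δ * (n : ℝ) ≤ (wordDist X (p i) (p j) : ℝ) := by
    simpa [hsum, e0, en] using hchain
  -- bound the error term
  have hcs : ((c : ℝ) - 1) * (L : ℝ) < (s : ℝ) := by
    have h' := key1 (c - 1) (by omega)
    have h'' : (((c - 1) * L : ℤ) : ℝ) < ((s : ℤ) : ℝ) := by exact_mod_cast h'
    push_cast at h''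
    linarith
  have hnR : ((n : ℕ) : ℝ) = (c : ℝ) := by exact_mod_cast hn
  have hcle : (c : ℝ) ≤ (s : ℝ) / (L : ℝ) + 1 := by
    have := (lt_div_iff₀ hLpos).mpr hcs
    linarith
  have h8 : 4 * δ * ((s : ℝ) / (L : ℝ)) ≤ (s : ℝ) / 2 := by
    rw [show 4 * δ * ((s : ℝ) / (L : ℝ)) = (4 * δ * (s : ℝ)) / (L : ℝ) by ring,
      div_le_div_iff₀ hLpos (by norm_num : (0:ℝ) < 2)]
    nlinarith [mul_le_mul_of_nonneg_left hLR hsR0]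
  have hδn : 4 * δ * ((n : ℕ) : ℝ) ≤ (s : ℝ) / 2 + 4 * δ := by
    rw [hnR]
    have h9 : 4 * δ * (c : ℝ) ≤ 4 * δ * ((s : ℝ) / (L : ℝ) + 1) :=
      mul_le_mul_of_nonneg_left hcle (by linarith)
    have h10 : 4 * δ * ((s : ℝ) / (L : ℝ) + 1) = 4 * δ * ((s : ℝ) / (L : ℝ)) + 4 * δ := by
      ring
    linarith
  linarith [hchain2, hδn]

/-- Small translation length: the Bowditch bound on conjugates of powers gives
linear progress. -/
lemma case_small (hX : Subgroup.closure X = ⊤) {δ τ : ℝ} (hδ : 0 ≤ δ) (hτ : 0 < τ)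
    {g : G} {p : ℤ → G} (hp : IsAxisPath X g p)
    (hBg : ∀ n : ℕ, τ * n ≤ (wordLength X (g ^ n) : ℝ))
    (hM1 : 1 ≤ (wordLength X g : ℤ))
    (hbig : ((wordLength X g : ℤ) : ℝ) < 16 * δ + 3) (i j : ℤ) (hij : i ≤ j)
    (hfar : (wordLength X g : ℤ) < j - i) :
    τ / (16 * δ + 3) * ((j - i : ℤ) : ℝ) - (τ + (16 * δ + 3)) ≤
      (wordDist X (p i) (p j) : ℝ) := by
  have h163 : (0:ℝ) < 16 * δ + 3 := by linarith
  obtain ⟨s, hs⟩ : ∃ s : ℤ, s = j - i := ⟨_, rfl⟩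
  rw [← hs] at hfar ⊢
  obtain ⟨q, hq⟩ : ∃ q : ℤ, q = s / (wordLength X g : ℤ) := ⟨_, rfl⟩
  obtain ⟨r, hr⟩ : ∃ r : ℤ, r = s % (wordLength X g : ℤ) := ⟨_, rfl⟩
  have hdm : (wordLength X g : ℤ) * q + r = s := by
    rw [hq, hr]; exact Int.mul_ediv_add_emod s _
  have hr0 : 0 ≤ r := by rw [hr]; exact Int.emod_nonneg s (by omega)
  have hr1 : r < (wordLength X g : ℤ) := by rw [hr]; exact Int.emod_lt_of_pos s (by omega)
  have e2 : q * (wordLength X g : ℤ) = s - r := by rw [mul_comm]; omega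
  have hq0 : 0 ≤ q := by
    by_contra hcon
    push_neg at hcon
    have h1 : q * (wordLength X g : ℤ) ≤ -(wordLength X g : ℤ) := by nlinarith
    omega
  have hqn : ((q.toNat : ℤ)) = q := Int.toNat_of_nonneg hq0
  have htr := axis_translate hp q i
  have hd1 : τ * (q : ℝ) ≤ (wordDist X (p i) (p (i + q * (wordLength X g : ℤ))) : ℝ) := by
    have hcl := conj_lower hX hτ g (p i) hBg q.toNat
    have hze : (p i)⁻¹ * g ^ q.toNat * (p i) = (p i)⁻¹ * (g ^ q * p i) := by
      rw [← zpow_natCast g q.toNat, hqn]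
      group
    unfold wordDist
    rw [htr, ← hze]
    have hq' : ((q.toNat : ℕ) : ℝ) = (q : ℝ) := by exact_mod_cast hqn
    rw [← hq']
    exact hcl
  have hup2 : (wordDist X (p (i + q * (wordLength X g : ℤ))) (p j) : ℤ) ≤ r := by
    have := axis_upper hp hM1 hX (i + q * (wordLength X g : ℤ)) j (by omega)
    omega
  have htri := wd_triangle hX (p i) (p j) (p (i + q * (wordLength X g : ℤ)))
  have hsymm : wordDist X (p j) (p (i + q * (wordLength X g : ℤ))) =
      wordDist X (p (i + q * (wordLength X g : ℤ))) (p j) := wd_symm hX _ _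
  have hlow : τ * (q : ℝ) - ((r : ℤ) : ℝ) ≤ (wordDist X (p i) (p j) : ℝ) := by
    have h1 : (wordDist X (p i) (p (i + q * (wordLength X g : ℤ))) : ℤ) ≤
        (wordDist X (p i) (p j) : ℤ) + r := by
      have h2 : (wordDist X (p i) (p (i + q * (wordLength X g : ℤ))) : ℤ) ≤
          (wordDist X (p i) (p j) : ℤ) +
            (wordDist X (p j) (p (i + q * (wordLength X g : ℤ))) : ℤ) := by
        exact_mod_cast htri
      rw [hsymm] at h2
      omega
    have h1' : ((wordDist X (p i) (p (i + q * (wordLength X g : ℤ))) : ℕ) : ℝ) ≤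
        ((wordDist X (p i) (p j) : ℕ) : ℝ) + ((r : ℤ) : ℝ) := by exact_mod_cast h1
    linarith
  -- real arithmetic
  have hmR : (1:ℝ) ≤ ((wordLength X g : ℤ) : ℝ) := by exact_mod_cast hM1
  have hrR1 : ((r : ℤ) : ℝ) < ((wordLength X g : ℤ) : ℝ) := by exact_mod_cast hr1
  have hrR0 : (0:ℝ) ≤ ((r : ℤ) : ℝ) := by exact_mod_cast hr0
  have hqR0 : (0:ℝ) ≤ (q : ℝ) := by exact_mod_cast hq0
  have hsR : ((wordLength X g : ℤ) : ℝ) < (s : ℝ) := by exact_mod_cast hfar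
  have hprod : ((wordLength X g : ℤ) : ℝ) * (q : ℝ) = (s : ℝ) - ((r : ℤ) : ℝ) := by
    have hZ : (wordLength X g : ℤ) * q = s - r := by omega
    exact_mod_cast hZ
  have hprodτ : τ * (((wordLength X g : ℤ) : ℝ) * (q : ℝ)) =
      τ * (s : ℝ) - τ * ((r : ℤ) : ℝ) := by rw [hprod]; ring
  have key : τ * (s : ℝ) ≤
      (τ * (q : ℝ) - ((r : ℤ) : ℝ) + (τ + (16 * δ + 3))) * (16 * δ + 3) := by
    nlinarith [hprodτ, mul_le_mul_of_nonneg_right hbig.le (mul_nonneg hτ.le hqR0),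
      mul_le_mul_of_nonneg_left hrR1.le hτ.le,
      mul_le_mul_of_nonneg_left (le_trans hrR1.le hbig.le) h163.le,
      mul_le_mul_of_nonneg_left hbig.le hτ.le]
  have hfin : τ / (16 * δ + 3) * (s : ℝ) ≤ τ * (q : ℝ) - ((r : ℤ) : ℝ) + (τ + (16 * δ + 3)) := by
    rw [show τ / (16 * δ + 3) * (s : ℝ) = τ * (s : ℝ) / (16 * δ + 3) by ring,
      div_le_iff₀ h163]
    nlinarith [key]
  linarith

end Cases
theorem axis_uniform_quasi_geodesic {G : Type*} [Group G] (X : Set G)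
    (hX : Subgroup.closure X = ⊤) (hsym : ∀ x ∈ X, x⁻¹ ∈ X)
    (δ : ℝ) (hδ : 0 ≤ δ) (hhyp : CayleyHyperbolic X δ)
    (hacyl : CayleyAcylindrical X)
    (τ : ℝ) (hτ : 0 < τ)
    (hBowditch : ∀ g : G, Loxodromic X g → ∀ n : ℕ, τ * n ≤ (wordLength X (g ^ n) : ℝ)) :
    ∃ κ₀ : ℝ, 1 ≤ κ₀ ∧ ∃ ε₀ : ℝ, 0 ≤ ε₀ ∧
      ∀ g : G, Loxodromic X g → ShortestInConjClass X g →
        ∀ p : ℤ → G, IsAxisPath X g p → IsQuasiGeodesicPath X κ₀ ε₀ p := by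
  have h163 : (0:ℝ) < 16 * δ + 3 := by linarith
  have hdivpos : (0:ℝ) < (16 * δ + 3) / τ := div_pos h163 hτ
  refine ⟨(16 * δ + 3) / τ + 2, by linarith, τ + 20 * δ + 3, by linarith, ?_⟩
  intro g hlox hshort p hp
  have hBg := hBowditch g hlox
  have hτM : τ ≤ (wordLength X g : ℝ) := by simpa using hBg 1
  have hMnat : 1 ≤ wordLength X g := by
    rcases Nat.eq_zero_or_pos (wordLength X g) with h | h
    · rw [h] at hτM; norm_num at hτM; linarith
    · exact h
  have hM1 : 1 ≤ (wordLength X g : ℤ) := by exact_mod_cast hMnat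
  have hκ2 : (2:ℝ) ≤ (16 * δ + 3) / τ + 2 := by linarith
  have lower : ∀ i j : ℤ, i ≤ j →
      (1 / ((16 * δ + 3) / τ + 2)) * ((j : ℝ) - (i : ℝ)) - (τ + 20 * δ + 3) ≤
        (wordDist X (p i) (p j) : ℝ) := by
    intro i j hij
    have hji : (j : ℝ) - (i : ℝ) = ((j - i : ℤ) : ℝ) := by push_cast; ring
    rw [hji]
    have hs0 : (0:ℝ) ≤ ((j - i : ℤ) : ℝ) := by
      exact_mod_cast (by omega : (0:ℤ) ≤ j - i)
    have hfrac : (1 / ((16 * δ + 3) / τ + 2)) * ((j - i : ℤ) : ℝ) ≤ ((j - i : ℤ) : ℝ) / 2 := by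
      have h1 : 1 / ((16 * δ + 3) / τ + 2) ≤ 1 / 2 :=
        one_div_le_one_div_of_le (by norm_num) hκ2
      nlinarith
    by_cases hclose : j - i ≤ (wordLength X g : ℤ)
    · have he := axis_exact hp hshort hM1 hX i j hij hclose
      have he' : (wordDist X (p i) (p j) : ℝ) = ((j - i : ℤ) : ℝ) := by exact_mod_cast he
      rw [he']
      linarith [hfrac, hτ.le]
    · push_neg at hclose
      by_cases hbig : 16 * δ + 3 ≤ ((wordLength X g : ℤ) : ℝ)
      · have hcl := case_large hX hδ hhyp hp hshort hbig i j hij hclose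
        linarith [hfrac]
      · push_neg at hbig
        have hcs := case_small hX hδ hτ hp hBg hM1 hbig i j hij hclose
        have hinv : 1 / ((16 * δ + 3) / τ + 2) ≤ τ / (16 * δ + 3) := by
          have h1 : (16 * δ + 3) / τ ≤ (16 * δ + 3) / τ + 2 := by linarith
          have h2 : 1 / ((16 * δ + 3) / τ + 2) ≤ 1 / ((16 * δ + 3) / τ) :=
            one_div_le_one_div_of_le hdivpos h1
          rwa [one_div_div] at h2
        have hinv' := mul_le_mul_of_nonneg_right hinv hs0
        linarith [hcs, hinv']
  intro i j
  constructor
  · rcases le_total i j with h | h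
    · have hl := lower i j h
      have habs : |(i : ℝ) - (j : ℝ)| = (j : ℝ) - (i : ℝ) := by
        rw [abs_sub_comm]
        exact abs_of_nonneg (by exact_mod_cast sub_nonneg.mpr h)
      rw [habs]
      exact hl
    · have hl := lower j i h
      have habs : |(i : ℝ) - (j : ℝ)| = (i : ℝ) - (j : ℝ) :=
        abs_of_nonneg (by exact_mod_cast sub_nonneg.mpr h)
      rw [habs, wd_symm hX]
      exact hl
  · have hub : (wordDist X (p i) (p j) : ℝ) ≤ |(i : ℝ) - (j : ℝ)| := by
      rcases le_total i j with h | h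
      · have h0 := axis_upper hp hM1 hX i j h
        have h' : (wordDist X (p i) (p j) : ℝ) ≤ (j : ℝ) - (i : ℝ) := by exact_mod_cast h0
        calc (wordDist X (p i) (p j) : ℝ) ≤ (j : ℝ) - (i : ℝ) := h'
          _ ≤ |(i : ℝ) - (j : ℝ)| := by rw [abs_sub_comm]; exact le_abs_self _
      · have h0 := axis_upper hp hM1 hX j i h
        have h' : (wordDist X (p j) (p i) : ℝ) ≤ (i : ℝ) - (j : ℝ) := by exact_mod_cast h0
        rw [wd_symm hX]
        calc (wordDist X (p j) (p i) : ℝ) ≤ (i : ℝ) - (j : ℝ) := h'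
          _ ≤ |(i : ℝ) - (j : ℝ)| := le_abs_self _
    have habs0 : (0:ℝ) ≤ |(i : ℝ) - (j : ℝ)| := abs_nonneg _
    nlinarith [hub, habs0, hκ2, hτ.le, hδ]
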